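/- Let h = (h₁,…,hₙ) be a tuple of units of k and let i be an index with hᵢ = 1. Then (yᵢ − xᵢ)² divides W̄^h_{i,i} − W̄^h_{i−1,i−1} − (yᵢ − xᵢ)·∂_{xᵢ}W̄^h_{i−1,i} in S. (This is the well-definedness of the structure constant g^h_{ii} for i ∈ I^h.) -/

import Mathlib

noncomputable section
open MvPolynomial
open scoped Classical

variable {k : Type} [Field k] {n : ℕ}

/-- The `x`-variables of `S = k[x₁,…,xₙ,y₁,…,yₙ]` (the ring `MvPolynomial (Fin n ⊕ Fin n) k`,
where `Sum.inl i` is `xᵢ` and `Sum.inr i` is `yᵢ`). -/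
def Xv (i : Fin n) : MvPolynomial (Fin n ⊕ Fin n) k := X (Sum.inl i)

/-- The `y`-variables of `S`. -/
def Yv (i : Fin n) : MvPolynomial (Fin n ⊕ Fin n) k := X (Sum.inr i)

/-- `W̄^h_{j,i} = W(y₁,…,y_j, x_{j+1},…,x_i, h_{i+1}x_{i+1},…,hₙxₙ) ∈ S`,
with `j i : ℕ` running from `0` to `n` (1-based indexing of the variables). -/
def Wbar (h : Fin n → kˣ) (W : MvPolynomial (Fin n) k) (j i : ℕ) :
    MvPolynomial (Fin n ⊕ Fin n) k :=
  aeval (fun t : Fin n =>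
    if (t : ℕ) < j then Yv t else if (t : ℕ) < i then Xv t else (h t : k) • Xv t) W

/-- `xᵢ^h := xᵢ` if `hᵢ = 1`, and `0` otherwise. -/
def xh (h : Fin n → kˣ) (t : Fin n) : MvPolynomial (Fin n) k :=
  if h t = 1 then X t else 0

/-- `W̃^h_{j,i} = W(x₁^h,…,x_j^h, x_{j+1},…,x_i, h_{i+1}x_{i+1},…,hₙxₙ) ∈ R`. -/
def Wtil (h : Fin n → kˣ) (W : MvPolynomial (Fin n) k) (j i : ℕ) :
    MvPolynomial (Fin n) k :=
  aeval (fun t : Fin n =>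
    if (t : ℕ) < j then xh h t else if (t : ℕ) < i then X t else (h t : k) • X t) W

/-- The substitution `xᵢ ↦ hᵢxᵢ`, `yᵢ ↦ yᵢ` on `S`. -/
def substH (h : Fin n → kˣ) :
    MvPolynomial (Fin n ⊕ Fin n) k →ₐ[k] MvPolynomial (Fin n ⊕ Fin n) k :=
  aeval (Sum.elim (fun i => (h i : k) • Xv i) Yv)

/-- The inclusion `R = k[x] → S = k[x,y]`. -/
def toS : MvPolynomial (Fin n) k →ₐ[k] MvPolynomial (Fin n ⊕ Fin n) k :=
  aeval Xv

/-- `h` is a diagonal symmetry of `W`: `W(h₁x₁,…,hₙxₙ) = W`. -/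
def IsDiagSym (h : Fin n → kˣ) (W : MvPolynomial (Fin n) k) : Prop :=
  aeval (fun t : Fin n => (h t : k) • X t) W = W

/-- `nab j` is the difference quotient `∇_jW`, characterized by
`(y_j−x_j)·∇_jW = W(y₁,…,y_j,x_{j+1},…,xₙ) − W(y₁,…,y_{j−1},x_j,…,xₙ)`. -/
def IsNabla (W : MvPolynomial (Fin n) k)
    (nab : Fin n → MvPolynomial (Fin n ⊕ Fin n) k) : Prop :=
  ∀ j : Fin n, (Yv j - Xv j) * nab j =
    aeval (fun t : Fin n => if t ≤ j then Yv t else Xv t) W -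
    aeval (fun t : Fin n => if t < j then Yv t else Xv t) W

/-- The family `(g_{ji})_{1≤j≤i≤n}` in `S` is adapted to `(W,h)`. -/
def GAdapted (h : Fin n → kˣ) (W : MvPolynomial (Fin n) k)
    (g : Fin n → Fin n → MvPolynomial (Fin n ⊕ Fin n) k) : Prop :=
  (∀ j i : Fin n, j < i → h i ≠ 1 →
    (Yv j - Xv j) * (Xv i - (h i : k) • Xv i) * g j i =
      (Wbar h W ((j : ℕ)+1) ((i : ℕ)+1) - Wbar h W (j : ℕ) ((i : ℕ)+1)) -
      (Wbar h W ((j : ℕ)+1) (i : ℕ) - Wbar h W (j : ℕ) (i : ℕ))) ∧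
  (∀ j i : Fin n, j < i → h i = 1 →
    (Yv j - Xv j) * g j i =
      pderiv (Sum.inl i) (Wbar h W ((j : ℕ)+1) ((i : ℕ)+1)) -
      pderiv (Sum.inl i) (Wbar h W (j : ℕ) ((i : ℕ)+1))) ∧
  (∀ i : Fin n, h i ≠ 1 →
    (Yv i - Xv i) * (Yv i - (h i : k) • Xv i) * (Xv i - (h i : k) • Xv i) * g i i =
      (Xv i - (h i : k) • Xv i) * (Wbar h W ((i : ℕ)+1) ((i : ℕ)+1) - Wbar h W (i : ℕ) (i : ℕ)) -
      (Yv i - (h i : k) • Xv i) * (Wbar h W (i : ℕ) ((i : ℕ)+1) - Wbar h W (i : ℕ) (i : ℕ))) ∧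
  (∀ i : Fin n, h i = 1 →
    (Yv i - Xv i)^2 * g i i =
      (Wbar h W ((i : ℕ)+1) ((i : ℕ)+1) - Wbar h W (i : ℕ) (i : ℕ)) -
      (Yv i - Xv i) * pderiv (Sum.inl i) (Wbar h W (i : ℕ) ((i : ℕ)+1)))

/-- The family `(f_{ji})_{1≤j<i≤n}` in `R` is adapted to `(W,h)`. -/
def FAdapted (h : Fin n → kˣ) (W : MvPolynomial (Fin n) k)
    (f : Fin n → Fin n → MvPolynomial (Fin n) k) : Prop :=
  (∀ j i : Fin n, j < i → h j ≠ 1 → h i ≠ 1 →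
    (X j - (h j : k) • X j) * (X i - (h i : k) • X i) * f j i =
      (Wtil h W ((j : ℕ)+1) ((i : ℕ)+1) - Wtil h W (j : ℕ) ((i : ℕ)+1)) -
      (Wtil h W ((j : ℕ)+1) (i : ℕ) - Wtil h W (j : ℕ) (i : ℕ))) ∧
  (∀ j i : Fin n, j < i → h j ≠ 1 → h i = 1 →
    (X j - (h j : k) • X j) * f j i =
      pderiv i (Wtil h W ((j : ℕ)+1) ((i : ℕ)+1)) - pderiv i (Wtil h W (j : ℕ) ((i : ℕ)+1))) ∧
  (∀ j i : Fin n, j < i → h j = 1 → h i ≠ 1 →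
    (X i - (h i : k) • X i) * f j i =
      (pderiv j (Wtil h W ((j : ℕ)+1) ((i : ℕ)+1)) - pderiv j (Wtil h W ((j : ℕ)+1) (i : ℕ))) -
      (pderiv j (Wtil h W (i : ℕ) (i : ℕ)) - pderiv j (Wtil h W ((i : ℕ)+1) ((i : ℕ)+1)))) ∧
  (∀ j i : Fin n, j < i → h j = 1 → h i = 1 → f j i = 0)

/- STATEMENT 3: if `hᵢ = 1` then `(yᵢ − xᵢ)²` divides
`W̄^h_{i,i} − W̄^h_{i−1,i−1} − (yᵢ − xᵢ)·∂_{xᵢ}W̄^h_{i−1,i}` in `S`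
(well-definedness of `g^h_{ii}` for `i ∈ I^h`). -/
theorem stmt3 (k : Type) [Field k] (n : ℕ) (W : MvPolynomial (Fin n) k)
    (h : Fin n → kˣ) (i : Fin n) (hi : h i = 1) :
    (Yv i - Xv i) ^ 2 ∣
      Wbar h W ((i : ℕ)+1) ((i : ℕ)+1) - Wbar h W (i : ℕ) (i : ℕ) -
        (Yv i - Xv i) * pderiv (Sum.inl i) (Wbar h W (i : ℕ) ((i : ℕ)+1)) := by
  classical
  set S := MvPolynomial (Fin n ⊕ Fin n) k
  set σ : Fin n → Polynomial S := fun t =>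
    if t = i then Polynomial.X
    else Polynomial.C (if (t : ℕ) < i then Yv t else (h t : k) • Xv t) with hσ
  -- derivative lemma (generalized)
  have eD : ∀ V : MvPolynomial (Fin n) k,
      pderiv (Sum.inl i) ((aeval σ V).eval (Xv i : S)) =
        (Polynomial.derivative (aeval σ V)).eval (Xv i : S) := by
    intro V
    induction V using MvPolynomial.induction_on with
    | C a => simp [MvPolynomial.aeval_C, MvPolynomial.algebraMap_eq]; exact MvPolynomial.pderiv_C
    | add p r hp hr => simp [hp, hr]
    | mul_X p t hp =>
      have key : pderiv (Sum.inl i) ((σ t).eval (Xv i : S)) =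
          (Polynomial.derivative (σ t)).eval (Xv i : S) := by
        by_cases ht : t = i
        · simp [hσ, ht, Xv, pderiv_X_self]
        · rw [hσ]
          simp only [if_neg ht, Polynomial.eval_C, Polynomial.derivative_C,
            Polynomial.eval_zero]
          by_cases hlt : (t : ℕ) < (i : ℕ)
          · rw [if_pos hlt]
            simp only [Yv]
            exact pderiv_X_of_ne (by simp)
          · rw [if_neg hlt]
            have hne : (Sum.inl t : Fin n ⊕ Fin n) ≠ Sum.inl i := by simp [ht]
            simp [Xv, pderiv_X_of_ne hne]
      simp only [map_mul, aeval_X, Polynomial.eval_mul, pderiv_mul,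
        Polynomial.derivative_mul, Polynomial.eval_add, hp, key]
      try ring
  set q : Polynomial S := aeval σ W with hq
  -- evaluation lemma
  have evalA : ∀ v : S, q.eval v =
      aeval (fun t : Fin n => if t = i then v
        else if (t : ℕ) < i then Yv t else (h t : k) • Xv t) W := by
    intro v
    have h2 : (fun t : Fin n => Polynomial.eval v (σ t)) =
        (fun t : Fin n => if t = i then v
          else if (t : ℕ) < i then Yv t else (h t : k) • Xv t) := by
      funext t
      by_cases ht : t = i <;> simp [hσ, ht]
    have h3 := comp_aeval_apply (f := σ)
      (((Polynomial.aeval v : Polynomial S →ₐ[S] S).restrictScalars k)) W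
    rw [hq]
    exact h3.trans (congrArg (fun f => (aeval f : MvPolynomial (Fin n) k →ₐ[k] S) W) h2)
  -- Wbar identifications
  have e1 : Wbar h W ((i : ℕ)+1) ((i : ℕ)+1) = q.eval (Yv i : S) := by
    rw [evalA, Wbar]
    refine congrArg (fun f => (aeval f : MvPolynomial (Fin n) k →ₐ[k] S) W) ?_
    funext t
    rcases lt_trichotomy (t : ℕ) (i : ℕ) with ht | ht | ht
    · have : t ≠ i := fun e => by simp [e] at ht
      simp [ht, Nat.lt_succ_of_lt ht, this]
    · have : t = i := Fin.ext ht
      simp [this]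
    · have h1 : ¬ (t : ℕ) < (i : ℕ) + 1 := by omega
      have h2 : ¬ (t : ℕ) < (i : ℕ) := by omega
      have : t ≠ i := fun e => by simp [e] at ht
      simp [h1, h2, this]
  have e2 : Wbar h W (i : ℕ) (i : ℕ) = q.eval (Xv i : S) := by
    rw [evalA, Wbar]
    refine congrArg (fun f => (aeval f : MvPolynomial (Fin n) k →ₐ[k] S) W) ?_
    funext t
    rcases lt_trichotomy (t : ℕ) (i : ℕ) with ht | ht | ht
    · have : t ≠ i := fun e => by simp [e] at ht
      simp [ht, this]
    · have : t = i := Fin.ext ht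
      simp [this, hi]
    · have h2 : ¬ (t : ℕ) < (i : ℕ) := by omega
      have : t ≠ i := fun e => by simp [e] at ht
      simp [h2, this]
  have e3 : Wbar h W (i : ℕ) ((i : ℕ)+1) = q.eval (Xv i : S) := by
    rw [evalA, Wbar]
    refine congrArg (fun f => (aeval f : MvPolynomial (Fin n) k →ₐ[k] S) W) ?_
    funext t
    rcases lt_trichotomy (t : ℕ) (i : ℕ) with ht | ht | ht
    · have : t ≠ i := fun e => by simp [e] at ht
      simp [ht, this]
    · have : t = i := Fin.ext ht
      simp [this, ht]
    · have h1 : ¬ (t : ℕ) < (i : ℕ) + 1 := by omega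
      have h2 : ¬ (t : ℕ) < (i : ℕ) := by omega
      have : t ≠ i := fun e => by simp [e] at ht
      simp [h1, h2, this]
  obtain ⟨c, hc⟩ := q.binomExpansion (Xv i : S) (Yv i - Xv i)
  rw [e1, e2, e3, hq, eD W, ← hq]
  have hx : (Xv i : S) + (Yv i - Xv i) = Yv i := by ring
  rw [hx] at hc
  exact ⟨c, by rw [hc]; ring⟩
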